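/- Let T be a closed linear relation from a Hilbert space ℌ to a Hilbert space 𝔎. Then the product T*T is a nonnegative selfadjoint relation in ℌ, and T*T = T*Tₛ = (Tₛ)*Tₛ. In particular, ker(T*T) = ker T = ker Tₛ and mul(T*T) = mul T* = mul((Tₛ)*). -/

import Mathlib

open scoped ComplexOrder

set_option synthInstance.maxHeartbeats 1000000
set_option maxHeartbeats 1000000

noncomputable section

variable {E F G : Type*}

section Basic
variable [AddCommGroup E] [Module ℂ E] [AddCommGroup F] [Module ℂ F]
  [AddCommGroup G] [Module ℂ G]

/-- The domain of a linear relation. -/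
def relDom (R : Submodule ℂ (E × F)) : Set E := Prod.fst '' (R : Set (E × F))

/-- The range of a linear relation. -/
def relRan (R : Submodule ℂ (E × F)) : Set F := Prod.snd '' (R : Set (E × F))

/-- The kernel of a linear relation. -/
def relKer (R : Submodule ℂ (E × F)) : Submodule ℂ E where
  carrier := {f | (f, (0 : F)) ∈ R}
  add_mem' := fun ha hb => by simpa using R.add_mem ha hb
  zero_mem' := by exact R.zero_mem
  smul_mem' := fun c _ ha => by simpa using R.smul_mem c ha

/-- The multivalued part of a linear relation. -/
def relMul (R : Submodule ℂ (E × F)) : Submodule ℂ F where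
  carrier := {g | ((0 : E), g) ∈ R}
  add_mem' := fun ha hb => by simpa using R.add_mem ha hb
  zero_mem' := by exact R.zero_mem
  smul_mem' := fun c _ ha => by simpa using R.smul_mem c ha

/-- The product (composition) `S R` of two linear relations. -/
def relComp (S : Submodule ℂ (F × G)) (R : Submodule ℂ (E × F)) :
    Submodule ℂ (E × G) where
  carrier := {p | ∃ φ : F, (p.1, φ) ∈ R ∧ (φ, p.2) ∈ S}
  add_mem' := by
    rintro p q ⟨φ, h1, h2⟩ ⟨ψ, h3, h4⟩
    exact ⟨φ + ψ, by simpa using R.add_mem h1 h3, by simpa using S.add_mem h2 h4⟩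
  zero_mem' := ⟨0, R.zero_mem, S.zero_mem⟩
  smul_mem' := by
    rintro c p ⟨φ, h1, h2⟩
    exact ⟨c • φ, by simpa using R.smul_mem c h1, by simpa using S.smul_mem c h2⟩

/-- The inverse of a linear relation. -/
def relInv (R : Submodule ℂ (E × F)) : Submodule ℂ (F × E) where
  carrier := {p | (p.2, p.1) ∈ R}
  add_mem' := fun ha hb => by simpa using R.add_mem ha hb
  zero_mem' := by exact R.zero_mem
  smul_mem' := fun c _ ha => by simpa using R.smul_mem c ha

/-- The scalar multiple `c H = {{f, c f'} : {f, f'} ∈ H}` of a linear relation. -/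
def relSmul (c : ℝ) (R : Submodule ℂ (E × F)) : Submodule ℂ (E × F) where
  carrier := {p | ∃ f', (p.1, f') ∈ R ∧ p.2 = (c : ℂ) • f'}
  add_mem' := by
    rintro p q ⟨f, h1, h2⟩ ⟨g, h3, h4⟩
    refine ⟨f + g, by simpa using R.add_mem h1 h3, ?_⟩
    simp [h2, h4, smul_add]
  zero_mem' := ⟨0, R.zero_mem, by simp⟩
  smul_mem' := by
    rintro a p ⟨f, h1, h2⟩
    refine ⟨a • f, by simpa using R.smul_mem a h1, ?_⟩
    rw [Prod.smul_snd, h2, smul_comm]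

/-- The relation `H + x = {{f, f' + x f} : {f, f'} ∈ H}`. -/
def relAddScalar (R : Submodule ℂ (E × E)) (x : ℝ) : Submodule ℂ (E × E) where
  carrier := {p | ∃ f', (p.1, f') ∈ R ∧ p.2 = f' + (x : ℂ) • p.1}
  add_mem' := by
    rintro p q ⟨f, h1, h2⟩ ⟨g, h3, h4⟩
    refine ⟨f + g, by simpa using R.add_mem h1 h3, ?_⟩
    simp only [Prod.fst_add, Prod.snd_add, h2, h4, smul_add]
    abel
  zero_mem' := ⟨0, R.zero_mem, by simp⟩
  smul_mem' := by
    rintro a p ⟨f, h1, h2⟩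
    refine ⟨a • f, by simpa using R.smul_mem a h1, ?_⟩
    rw [Prod.smul_snd, Prod.smul_fst, h2, smul_add, smul_comm]

end Basic

section Hilbert

variable [NormedAddCommGroup E] [InnerProductSpace ℂ E]
  [NormedAddCommGroup F] [InnerProductSpace ℂ F]
  [NormedAddCommGroup G] [InnerProductSpace ℂ G]

/-- The graph of a bounded everywhere defined operator, as a linear relation. -/
def graphRel (W : E →L[ℂ] F) : Submodule ℂ (E × F) :=
  LinearMap.graph (W : E →ₗ[ℂ] F)

/-- The adjoint of a linear relation:
`H* = {{k, k'} : ⟨f', k⟩ = ⟨f, k'⟩ for all {f, f'} ∈ H}`. -/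
def relAdj (R : Submodule ℂ (E × F)) : Submodule ℂ (F × E) where
  carrier := {q | ∀ p ∈ R, (inner ℂ p.2 q.1 : ℂ) = inner ℂ p.1 q.2}
  add_mem' := by
    intro a b ha hb p hp
    simp only [Prod.fst_add, Prod.snd_add, inner_add_right]
    rw [ha p hp, hb p hp]
  zero_mem' := by intro p hp; simp
  smul_mem' := by
    intro c q hq p hp
    simp only [Prod.smul_fst, Prod.smul_snd, inner_smul_right]
    rw [hq p hp]

/-- A linear relation in a Hilbert space is nonnegative if `⟨h', h⟩ ≥ 0`
for all `{h, h'}` in the relation. -/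
def relNonneg (R : Submodule ℂ (E × E)) : Prop :=
  ∀ p ∈ R, 0 ≤ (inner ℂ p.2 p.1 : ℂ)

/-- A linear relation in a Hilbert space is selfadjoint if `H = H*`. -/
def relSelfAdj (R : Submodule ℂ (E × E)) : Prop := relAdj R = R

/-- The operator part `Hₛ = {{f, P f'} : {f, f'} ∈ H}` of a linear relation,
where `P` is the orthogonal projection onto `(mul H)ᗮ`. -/
def opPart [CompleteSpace F] (R : Submodule ℂ (E × F)) : Submodule ℂ (E × F) where
  carrier := {p | ∃ f' : F, (p.1, f') ∈ R ∧
      p.2 = (Submodule.orthogonalProjectionOnto (relMul R)ᗮ f' : F)}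
  add_mem' := by
    rintro p q ⟨f, h1, h2⟩ ⟨g, h3, h4⟩
    refine ⟨f + g, by simpa using R.add_mem h1 h3, ?_⟩
    simp [h2, h4]
  zero_mem' := ⟨0, R.zero_mem, by simp⟩
  smul_mem' := by
    rintro c p ⟨f, h1, h2⟩
    refine ⟨c • f, by simpa using R.smul_mem c h1, ?_⟩
    simp [h2]

/-- The ordering of nonnegative selfadjoint relations: `H₁ ≤ H₂` iff, with `Kᵢ`
the (unique) nonnegative selfadjoint square root of `Hᵢ`, one has
`dom K₂ ⊆ dom K₁` and `‖(K₁)ₛ h‖ ≤ ‖(K₂)ₛ h‖` for all `h ∈ dom K₂`. -/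
def RelLE [CompleteSpace E] (H₁ H₂ : Submodule ℂ (E × E)) : Prop :=
  ∃ K₁ K₂ : Submodule ℂ (E × E),
    relNonneg K₁ ∧ relSelfAdj K₁ ∧ relComp K₁ K₁ = H₁ ∧
    relNonneg K₂ ∧ relSelfAdj K₂ ∧ relComp K₂ K₂ = H₂ ∧
    relDom K₂ ⊆ relDom K₁ ∧
    ∀ h k₁ k₂, (h, k₁) ∈ opPart K₁ → (h, k₂) ∈ opPart K₂ → ‖k₁‖ ≤ ‖k₂‖

end Hilbert


section Aux

variable {H K : Type*} [NormedAddCommGroup H] [InnerProductSpace ℂ H]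
  [NormedAddCommGroup K] [InnerProductSpace ℂ K]

lemma mem_relComp' {E F G : Type*} [AddCommGroup E] [Module ℂ E] [AddCommGroup F]
    [Module ℂ F] [AddCommGroup G] [Module ℂ G] {S : Submodule ℂ (F × G)}
    {R : Submodule ℂ (E × F)} {p : E × G} :
    p ∈ relComp S R ↔ ∃ φ, (p.1, φ) ∈ R ∧ (φ, p.2) ∈ S := Iff.rfl

lemma mem_relAdj' {R : Submodule ℂ (H × K)} {q : K × H} :
    q ∈ relAdj R ↔ ∀ p ∈ R, (inner ℂ p.2 q.1 : ℂ) = inner ℂ p.1 q.2 := Iff.rfl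

lemma mem_opPart' [CompleteSpace K] {R : Submodule ℂ (H × K)} {p : H × K} :
    p ∈ opPart R ↔ ∃ f', (p.1, f') ∈ R ∧
      p.2 = (Submodule.orthogonalProjectionOnto (relMul R)ᗮ f' : K) := Iff.rfl

/-- First components of the adjoint are orthogonal to the multivalued part. -/
lemma relAdj_fst_mem_orth (T : Submodule ℂ (H × K)) {k : K} {k' : H}
    (h : (k, k') ∈ relAdj T) : k ∈ (relMul T)ᗮ := by
  rw [Submodule.mem_orthogonal]
  intro u hu
  have := h (0, u) hu
  simpa using this

lemma relMul_isClosed (T : Submodule ℂ (H × K)) (hT : IsClosed (T : Set (H × K))) :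
    IsClosed ((relMul T : Submodule ℂ K) : Set K) := by
  have : ((relMul T : Submodule ℂ K) : Set K)
      = (fun g : K => ((0 : H), g)) ⁻¹' (T : Set (H × K)) := rfl
  rw [this]
  exact hT.preimage (Continuous.prodMk continuous_const continuous_id)

lemma sub_proj_mem_relMul [CompleteSpace K] (T : Submodule ℂ (H × K))
    (hT : IsClosed (T : Set (H × K))) (x : K) :
    x - (Submodule.orthogonalProjectionOnto (relMul T)ᗮ x : K) ∈ relMul T := by
  have h1 := Submodule.sub_starProjection_mem_orthogonal (K := (relMul T)ᗮ) x
  haveI : CompleteSpace (relMul T) := (relMul_isClosed T hT).completeSpace_coe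
  rwa [Submodule.orthogonal_orthogonal] at h1

lemma proj_pair_mem [CompleteSpace K] (T : Submodule ℂ (H × K))
    (hT : IsClosed (T : Set (H × K))) {f : H} {f' : K} (h : (f, f') ∈ T) :
    (f, (Submodule.orthogonalProjectionOnto (relMul T)ᗮ f' : K)) ∈ T := by
  have h2 : ((0 : H), f' - (Submodule.orthogonalProjectionOnto (relMul T)ᗮ f' : K)) ∈ T :=
    sub_proj_mem_relMul T hT f'
  have h3 := T.sub_mem h h2
  simpa [sub_sub_cancel] using h3

lemma inner_proj_left [CompleteSpace K] (T : Submodule ℂ (H × K)) (x : K) {w : K}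
    (hw : w ∈ (relMul T)ᗮ) :
    (inner ℂ x w : ℂ) = inner ℂ ((Submodule.orthogonalProjectionOnto (relMul T)ᗮ x : K)) w := by
  rw [← sub_eq_zero, ← inner_sub_left]
  exact Submodule.inner_left_of_mem_orthogonal hw
    (Submodule.sub_starProjection_mem_orthogonal (K := (relMul T)ᗮ) x)

lemma relAdj_le_relAdj_opPart [CompleteSpace K] (T : Submodule ℂ (H × K)) :
    relAdj T ≤ relAdj (opPart T) := by
  rintro ⟨k, k'⟩ h
  rintro ⟨x, y⟩ ⟨f', hf', hy⟩
  simp only at hy ⊢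
  rw [hy, ← inner_proj_left T f' (relAdj_fst_mem_orth T h)]
  exact h (x, f') hf'

lemma relAdj_opPart_mem [CompleteSpace K] (T : Submodule ℂ (H × K)) {k : K} {k' : H}
    (hk : k ∈ (relMul T)ᗮ) (h : (k, k') ∈ relAdj (opPart T)) : (k, k') ∈ relAdj T := by
  rintro ⟨a, b⟩ hab
  have hab' : (a, (Submodule.orthogonalProjectionOnto (relMul T)ᗮ b : K)) ∈ opPart T := ⟨b, hab, rfl⟩
  have := h _ hab'
  simp only at this ⊢
  rwa [← inner_proj_left T b hk] at this

/-- `T*T` is symmetric. -/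
lemma comp_adj_symm (T : Submodule ℂ (H × K)) :
    ∀ p ∈ relComp (relAdj T) T, ∀ q ∈ relComp (relAdj T) T,
      (inner ℂ p.2 q.1 : ℂ) = inner ℂ p.1 q.2 := by
  rintro ⟨f, f'⟩ ⟨φ, h1, h2⟩ ⟨g, g'⟩ ⟨ψ, h3, h4⟩
  have e1 := h2 (g, ψ) h3
  have e2 := h4 (f, φ) h1
  simp only at e1 e2 ⊢
  calc (inner ℂ f' g : ℂ) = starRingEnd ℂ (inner ℂ g f') := (inner_conj_symm _ _).symm
    _ = starRingEnd ℂ (inner ℂ ψ φ) := by rw [e1]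
    _ = inner ℂ φ ψ := inner_conj_symm _ _
    _ = inner ℂ f g' := e2

/-- Surjectivity of `I + T*T`, from the decomposition `ℌ × 𝔎 = T ⊕ J T*`. -/
lemma comp_adj_surj [CompleteSpace H] [CompleteSpace K] (T : Submodule ℂ (H × K))
    (hT : IsClosed (T : Set (H × K))) (h : H) :
    ∃ f f', (f, f') ∈ relComp (relAdj T) T ∧ f + f' = h := by
  set T2 : Submodule ℂ (WithLp 2 (H × K)) :=
    T.comap (WithLp.linearEquiv 2 ℂ (H × K) : WithLp 2 (H × K) →ₗ[ℂ] H × K) with hT2def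
  have hT2 : IsClosed (T2 : Set (WithLp 2 (H × K))) :=
    hT.preimage (WithLp.prodContinuousLinearEquiv 2 ℂ H K).continuous
  haveI : CompleteSpace T2 := hT2.completeSpace_coe
  obtain ⟨y, hy, z, hz, hsum⟩ :=
    T2.exists_add_mem_mem_orthogonal ((WithLp.equiv 2 (H × K)).symm (h, 0))
  have hy' : (y.fst, y.snd) ∈ T := hy
  have h1 : y.fst + z.fst = h := by simpa using congrArg WithLp.fst hsum.symm
  have h2 : y.snd + z.snd = 0 := by simpa using congrArg WithLp.snd hsum.symm
  have hz2 : z.snd = -y.snd := by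
    rw [eq_neg_iff_add_eq_zero, add_comm]; exact h2
  have hz' : (y.snd, z.fst) ∈ relAdj T := by
    rintro ⟨a, b⟩ hab
    have hmem : ((WithLp.equiv 2 (H × K)).symm (a, b)) ∈ T2 := hab
    have horth := Submodule.inner_right_of_mem_orthogonal hmem hz
    rw [WithLp.prod_inner_apply] at horth
    simp only [WithLp.ofLp_fst, WithLp.ofLp_snd, WithLp.equiv_symm_apply, WithLp.toLp_fst, WithLp.toLp_snd] at horth
    rw [hz2, inner_neg_right] at horth
    simp only
    linear_combination -horth
  exact ⟨y.fst, z.fst, ⟨y.snd, hy', hz'⟩, h1⟩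

lemma adj_comp_le [CompleteSpace H] [CompleteSpace K] (T : Submodule ℂ (H × K))
    (hT : IsClosed (T : Set (H × K))) :
    relAdj (relComp (relAdj T) T) ≤ relComp (relAdj T) T := by
  rintro ⟨g, g'⟩ hg
  obtain ⟨f, f', hff, hsum⟩ := comp_adj_surj T hT (g + g')
  have key : g = f := by
    obtain ⟨w, w', hww, hwsum⟩ := comp_adj_surj T hT (g - f)
    have e1 : (inner ℂ w' g : ℂ) = inner ℂ w g' := hg (w, w') hww
    have e2 : (inner ℂ w' f : ℂ) = inner ℂ w f' := comp_adj_symm T (w, w') hww (f, f') hff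
    have eA : (inner ℂ (g - f) (g - f) : ℂ) = inner ℂ w (g - f) + inner ℂ w' (g - f) := by
      rw [← hwsum, inner_add_left]
    have eB : (inner ℂ w' (g - f) : ℂ) = inner ℂ w g' - inner ℂ w f' := by
      rw [inner_sub_right, e1, e2]
    have h0 : (g - f) + (g' - f') = 0 := by
      rw [sub_add_sub_comm, ← hsum, sub_self]
    have eC : (inner ℂ w (g - f) : ℂ) + (inner ℂ w g' - inner ℂ w f') = 0 := by
      rw [← inner_sub_right, ← inner_add_right, h0, inner_zero_right]
    have e3 : (inner ℂ (g - f) (g - f) : ℂ) = 0 := by rw [eA, eB]; exact eC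
    have := inner_self_eq_zero.mp e3
    exact sub_eq_zero.mp this
  subst key
  have hf' : f' = g' := by
    have := hsum
    exact add_left_cancel this
  rw [← hf']
  exact hff

end Aux


theorem stmt_3 {𝓗 𝓚 : Type*}
    [NormedAddCommGroup 𝓗] [InnerProductSpace ℂ 𝓗] [CompleteSpace 𝓗]
    [NormedAddCommGroup 𝓚] [InnerProductSpace ℂ 𝓚] [CompleteSpace 𝓚]
    (T : Submodule ℂ (𝓗 × 𝓚)) (hT : IsClosed (T : Set (𝓗 × 𝓚))) :
    relNonneg (relComp (relAdj T) T) ∧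
    relSelfAdj (relComp (relAdj T) T) ∧
    relComp (relAdj T) T = relComp (relAdj T) (opPart T) ∧
    relComp (relAdj T) T = relComp (relAdj (opPart T)) (opPart T) ∧
    relKer (relComp (relAdj T) T) = relKer T ∧
    relKer T = relKer (opPart T) ∧
    relMul (relComp (relAdj T) T) = relMul (relAdj T) ∧
    relMul (relAdj T) = relMul (relAdj (opPart T)) := by
  set P := Submodule.orthogonalProjectionOnto (relMul T)ᗮ with hP
  set S := relComp (relAdj T) T with hS
  have hnonneg : relNonneg S := by
    rintro ⟨f, f'⟩ ⟨φ, h1, h2⟩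
    have e1 := h2 (f, φ) h1
    simp only at e1 ⊢
    calc (0 : ℂ) ≤ inner ℂ φ φ := by
          rw [inner_self_eq_norm_sq_to_K]
          have := Complex.zero_le_real.mpr (sq_nonneg ‖φ‖)
          push_cast at this
          exact this
      _ = starRingEnd ℂ (inner ℂ φ φ) := by rw [inner_conj_symm]
      _ = starRingEnd ℂ (inner ℂ f f') := by rw [e1]
      _ = inner ℂ f' f := inner_conj_symm _ _
  have hself : relSelfAdj S := by
    refine le_antisymm (adj_comp_le T hT) ?_
    intro p hp
    intro q hq
    exact comp_adj_symm T q hq p hp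
  have heq1 : S = relComp (relAdj T) (opPart T) := by
    apply le_antisymm
    · rintro ⟨f, f'⟩ ⟨φ, h1, h2⟩
      have hφ : φ ∈ (relMul T)ᗮ := relAdj_fst_mem_orth T h2
      exact ⟨φ, ⟨φ, h1, (Submodule.starProjection_eq_self_iff.mpr hφ).symm⟩, h2⟩
    · rintro ⟨f, f'⟩ ⟨ψ, ⟨φ, h1, hψ⟩, h2⟩
      refine ⟨ψ, ?_, h2⟩
      simp only at hψ
      rw [hψ]
      exact proj_pair_mem T hT h1
  have heq2 : S = relComp (relAdj (opPart T)) (opPart T) := by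
    apply le_antisymm
    · rintro ⟨f, f'⟩ ⟨φ, h1, h2⟩
      have hφ : φ ∈ (relMul T)ᗮ := relAdj_fst_mem_orth T h2
      exact ⟨φ, ⟨φ, h1, (Submodule.starProjection_eq_self_iff.mpr hφ).symm⟩,
        relAdj_le_relAdj_opPart T h2⟩
    · rintro ⟨f, f'⟩ ⟨ψ, ⟨φ, h1, hψ⟩, h2⟩
      simp only at hψ
      have hψorth : ψ ∈ (relMul T)ᗮ := by rw [hψ]; exact SetLike.coe_mem _
      refine ⟨ψ, ?_, relAdj_opPart_mem T hψorth h2⟩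
      rw [hψ]
      exact proj_pair_mem T hT h1
  have hker1 : relKer S = relKer T := by
    ext f
    constructor
    · rintro ⟨φ, h1, h2⟩
      have e1 := h2 (f, φ) h1
      simp only [inner_zero_right] at e1
      have : φ = 0 := inner_self_eq_zero.mp e1
      rw [this] at h1
      exact h1
    · intro hf
      exact ⟨0, hf, Submodule.zero_mem _⟩
  have hker2 : relKer T = relKer (opPart T) := by
    ext f
    constructor
    · intro hf
      exact ⟨0, hf, by simp⟩
    · rintro ⟨f', h1, h2⟩
      simp only at h2
      have hmul : f' ∈ relMul T := by
        have := sub_proj_mem_relMul T hT f'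
        rwa [← h2, sub_zero] at this
      have h3 : ((0 : 𝓗), f') ∈ T := hmul
      have h4 := T.sub_mem h1 h3
      show (f, (0 : 𝓚)) ∈ T
      simpa using h4
  have hmul1 : relMul S = relMul (relAdj T) := by
    ext g
    constructor
    · rintro ⟨φ, h1, h2⟩
      have e1 := h2 (0, φ) h1
      simp only [inner_zero_left] at e1
      have : φ = 0 := inner_self_eq_zero.mp e1
      rw [this] at h2
      exact h2
    · intro hg
      exact ⟨0, T.zero_mem, hg⟩
  have hmul2 : relMul (relAdj T) = relMul (relAdj (opPart T)) := by
    ext k'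
    constructor
    · intro h
      rintro ⟨x, y⟩ ⟨f', hf', hy⟩
      have := h (x, f') hf'
      simp only [inner_zero_right] at this ⊢
      exact this
    · intro h
      rintro ⟨a, b⟩ hab
      have hab' : (a, (P b : 𝓚)) ∈ opPart T := ⟨b, hab, rfl⟩
      have := h _ hab'
      simp only [inner_zero_right] at this ⊢
      exact this
  exact ⟨hnonneg, hself, heq1, heq2, hker1, hker2, hmul1, hmul2⟩
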